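/- Let K_1 : X × X → A and K_2 : S × S → B be positive definite kernels on nonempty sets X and S with values in C*-algebras A and B, and let E_1 and E_2 be their associated reproducing kernel Hilbert C*-modules. Then the tensor product kernel K_1 ⊗ K_2 : (X × S) × (X × S) → A ⊗_* B, (K_1 ⊗ K_2)((x,s),(y,t)) = K_1(x,y) ⊗ K_2(s,t), is positive definite, and the reproducing kernel Hilbert C*-module over A ⊗_* B associated with K_1 ⊗ K_2 is unitarily equivalent to the exterior tensor product E_1 ⊗ E_2, via the unitary determined by k^1_x a ⊗ k^2_s b ↦ k_{(x,s)}·(a ⊗ b). -/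

import Mathlib

open scoped RightActions

/-- The Hilbert C*-module class with the older Mathlib (Dec. 2024) meaning: a complex module `E`
with a *right* `A`-action (via `Aᵐᵒᵖ`) and an `A`-valued inner product. Mathlib's current
`CStarModule` uses a left `A`-action instead. -/
class CStarModuleRight (A E : Type*) [NonUnitalSemiring A] [StarRing A]
    [Module ℂ A] [AddCommGroup E] [Module ℂ E] [PartialOrder A] [SMul Aᵐᵒᵖ E] [Norm A] [Norm E]
    extends Inner A E where
  inner_add_right {x} {y} {z} : inner x (y + z) = inner x y + inner x z
  inner_self_nonneg {x} : 0 ≤ inner x x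
  inner_self {x} : inner x x = 0 ↔ x = 0
  inner_op_smul_right {a : A} {x y : E} : inner x (y <• a) = inner x y * a
  inner_smul_right_complex {z : ℂ} {x} {y} : inner x (z • y) = z • inner x y
  star_inner x y : star (inner x y) = inner y x
  norm_eq_sqrt_norm_inner_self x : ‖x‖ = Real.sqrt ‖inner x x‖

/-- A *reproducing kernel Hilbert C*-module* (RKHC*M) over the C*-algebra `A` on the set `S`:
a Hilbert C*-module `E` over `A` realized (injectively) as a right `A`-submodule of the
`A`-valued functions on `S` via `toFun`, together with kernel elements `k s` such that
evaluation at `s` is given by `f ↦ ⟪k s, f⟫`, and such that the `A`-linear span of the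
`k s` is dense in `E`. -/
structure RKHCM (A : Type*) (S : Type*) (E : Type*)
    [CStarAlgebra A] [PartialOrder A] [StarOrderedRing A]
    [NormedAddCommGroup E] [NormedSpace ℂ E] [SMul Aᵐᵒᵖ E] [CStarModuleRight A E] where
  toFun : E → S → A
  injective : Function.Injective toFun
  k : S → E
  eval_eq : ∀ (f : E) (s : S), toFun f s = inner A (k s) f
  dense_span : Dense
    ((Submodule.span ℂ (Set.range fun p : S × A => k p.1 <• p.2) : Submodule ℂ E) : Set E)

/-- A positive definite `A`-valued kernel on `S`. -/
def IsPosDefKernel {A : Type*} [CStarAlgebra A] [PartialOrder A] [StarOrderedRing A]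
    {S : Type*} (K : S → S → A) : Prop :=
  ∀ (n : ℕ) (s : Fin n → S) (a : Fin n → A),
    0 ≤ ∑ i, ∑ j, star (a i) * K (s i) (s j) * a j

/-- An abstract C*-tensor product of the C*-algebras `A` and `B`: a C*-algebra `C`
together with a bilinear map `tmul : A → B → C` (elementary tensors `a ⊗ b`) which is
multiplicative and star-preserving in both variables jointly, and whose elementary
tensors have dense linear span in `C`. -/
structure CStarTensor (A B C : Type*)
    [CStarAlgebra A] [CStarAlgebra B] [CStarAlgebra C] where
  tmul : A →ₗ[ℂ] B →ₗ[ℂ] C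
  tmul_mul : ∀ (a a' : A) (b b' : B), tmul (a * a') (b * b') = tmul a b * tmul a' b'
  tmul_star : ∀ (a : A) (b : B), star (tmul a b) = tmul (star a) (star b)
  dense_span : Dense
    ((Submodule.span ℂ (Set.range fun p : A × B => tmul p.1 p.2) : Submodule ℂ C) : Set C)

/-- The exterior tensor product of a Hilbert C*-module `E₁` over `A` and a Hilbert
C*-module `E₂` over `B`, relative to the C*-tensor product `T : A ⊗ B = C`: a Hilbert
C*-module `F` over `C` with a bilinear map `tmulE : E₁ → E₂ → F` (elementary tensors)
whose inner products satisfy `⟪x ⊗ y, z ⊗ w⟫ = ⟪x,z⟫ ⊗ ⟪y,w⟫`, compatible with the right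
module actions, and with dense linear span. -/
structure ExtTensorProduct {A B C : Type*}
    [CStarAlgebra A] [CStarAlgebra B] [CStarAlgebra C]
    [PartialOrder A] [StarOrderedRing A] [PartialOrder B] [StarOrderedRing B]
    [PartialOrder C] [StarOrderedRing C]
    (T : CStarTensor A B C) (E₁ E₂ F : Type*)
    [NormedAddCommGroup E₁] [NormedSpace ℂ E₁] [SMul Aᵐᵒᵖ E₁] [CStarModuleRight A E₁]
    [NormedAddCommGroup E₂] [NormedSpace ℂ E₂] [SMul Bᵐᵒᵖ E₂] [CStarModuleRight B E₂]
    [NormedAddCommGroup F] [NormedSpace ℂ F] [SMul Cᵐᵒᵖ F] [CStarModuleRight C F] where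
  tmulE : E₁ →ₗ[ℂ] E₂ →ₗ[ℂ] F
  inner_tmulE : ∀ (x z : E₁) (y w : E₂),
    (inner C (tmulE x y) (tmulE z w) : C) = T.tmul (inner A x z : A) (inner B y w : B)
  tmulE_smul : ∀ (x : E₁) (y : E₂) (a : A) (b : B),
    tmulE (x <• a) (y <• b) = tmulE x y <• T.tmul a b
  dense_span : Dense
    ((Submodule.span ℂ (Set.range fun p : E₁ × E₂ => tmulE p.1 p.2) : Submodule ℂ F) : Set F)

namespace CStarModuleRight
variable {A E : Type*} [CStarAlgebra A] [PartialOrder A]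
    [NormedAddCommGroup E] [NormedSpace ℂ E] [SMul Aᵐᵒᵖ E] [CStarModuleRight A E]

lemma inner_add_left' {x y z : E} : inner A (x + y) z = inner A x z + inner A y z := by
  rw [← star_inner (A := A) z (x + y), inner_add_right, star_add, star_inner, star_inner]

lemma inner_smul_left_complex {z : ℂ} {x y : E} : inner A (z • x) y = star z • inner A x y := by
  rw [← star_inner (A := A) y, inner_smul_right_complex, star_smul, star_inner]

lemma inner_op_smul_left {a : A} {x y : E} : inner A (x <• a) y = star a * inner A x y := by
  rw [← star_inner (A := A) y, inner_op_smul_right, star_mul, star_inner]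

lemma inner_zero_right {x : E} : inner A x (0 : E) = 0 := by
  have h := inner_smul_right_complex (A := A) (z := 0) (x := x) (y := 0)
  simpa using h

lemma inner_zero_left {x : E} : inner A (0 : E) x = 0 := by
  rw [← star_inner (A := A) x, inner_zero_right, star_zero]

lemma inner_sum_right {ι : Type*} {s : Finset ι} {x : E} {y : ι → E} :
    inner A x (∑ i ∈ s, y i) = ∑ i ∈ s, inner A x (y i) :=
  map_sum (AddMonoidHom.mk' (fun y : E => inner A x y) fun _ _ => inner_add_right) y s

lemma inner_sum_left {ι : Type*} {s : Finset ι} {x : ι → E} {y : E} :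
    inner A (∑ i ∈ s, x i) y = ∑ i ∈ s, inner A (x i) y :=
  map_sum (AddMonoidHom.mk' (fun x : E => inner A x y) fun _ _ => inner_add_left') x s

lemma inner_sub_right {x y z : E} : inner A x (y - z) = inner A x y - inner A x z :=
  eq_sub_of_add_eq (by rw [← inner_add_right, sub_add_cancel])

lemma inner_sub_left {x y z : E} : inner A (x - y) z = inner A x z - inner A y z :=
  eq_sub_of_add_eq (by rw [← inner_add_left', sub_add_cancel])

lemma inner_smul_right_real {r : ℝ} {x y : E} : inner A x (r • y) = r • inner A x y := by
  rw [← Complex.coe_smul r y, inner_smul_right_complex, Complex.coe_smul]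

lemma inner_smul_left_real {r : ℝ} {x y : E} : inner A (r • x) y = r • inner A x y := by
  rw [← Complex.coe_smul r x, inner_smul_left_complex, Complex.star_def, Complex.conj_ofReal,
    Complex.coe_smul]

lemma norm_sq_eq {x : E} : ‖x‖ ^ 2 = ‖inner A x x‖ := by
  rw [norm_eq_sqrt_norm_inner_self (A := A) x, Real.sq_sqrt (norm_nonneg _)]

lemma inner_swap_mul_le [StarOrderedRing A] {x y : E} : inner A y x * inner A x y ≤ ‖x‖ ^ 2 • inner A y y := by
  rcases eq_or_ne x 0 with h | h
  · subst h
    simp [inner_zero_left, inner_zero_right]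
  · have hx : 0 < ‖x‖ ^ 2 := pow_pos (norm_pos_iff.mpr h) 2
    have hsa : star (inner A x y) = inner A y x := star_inner x y
    have h0 := inner_self_nonneg (A := A) (x := x <• inner A x y - ‖x‖ ^ 2 • y)
    simp only [inner_sub_left, inner_sub_right, inner_op_smul_left, inner_op_smul_right,
      inner_smul_left_real, inner_smul_right_real, ← hsa, mul_smul_comm, sub_mul,
      smul_mul_assoc, smul_sub] at h0
    have hb : star (inner A x y) * inner A x x * inner A x y
        ≤ ‖x‖ ^ 2 • (star (inner A x y) * inner A x y) := by
      rw [norm_sq_eq (A := A)]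
      exact CStarAlgebra.star_left_conjugate_le_norm_smul (star_inner x x)
    rw [hsa] at hb h0
    rw [← smul_le_smul_iff_of_pos_left hx, ← sub_nonneg]
    calc (0 : A) ≤ _ := h0
      _ ≤ ‖x‖ ^ 2 • (inner A y x * inner A x y) - ‖x‖ ^ 2 • (inner A y x * inner A x y)
          - (‖x‖ ^ 2 • (inner A y x * inner A x y) - ‖x‖ ^ 2 • (‖x‖ ^ 2 • inner A y y)) := by
        gcongr
      _ = _ := by abel

lemma norm_inner_le [StarOrderedRing A] {x y : E} : ‖inner A x y‖ ≤ ‖x‖ * ‖y‖ := by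
  have h2 : ‖inner A x y‖ ^ 2 ≤ (‖x‖ * ‖y‖) ^ 2 := calc
    ‖inner A x y‖ ^ 2 = ‖star (inner A x y) * inner A x y‖ := by
        rw [CStarRing.norm_star_mul_self, pow_two]
    _ = ‖inner A y x * inner A x y‖ := by rw [star_inner]
    _ ≤ ‖‖x‖ ^ 2 • inner A y y‖ := CStarAlgebra.norm_le_norm_of_nonneg_of_le
        (by rw [← star_inner x y]; exact star_mul_self_nonneg _) inner_swap_mul_le
    _ = ‖x‖ ^ 2 * ‖inner A y y‖ := by rw [norm_smul, Real.norm_of_nonneg (by positivity)]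
    _ = (‖x‖ * ‖y‖) ^ 2 := by rw [← norm_sq_eq (A := A) (x := y)]; ring
  exact (pow_le_pow_iff_left₀ (norm_nonneg _) (by positivity) (by norm_num)).mp h2

lemma continuous_inner [StarOrderedRing A] : Continuous (fun p : E × E => inner A p.1 p.2) := by
  have := (LinearMap.mkContinuous₂ (LinearMap.mk₂ ℝ (fun x y : E => inner A x y)
    (fun _ _ _ => inner_add_left') (fun _ _ _ => inner_smul_left_real)
    (fun _ _ _ => inner_add_right) (fun _ _ _ => inner_smul_right_real)) 1
    (fun x y => by simpa using norm_inner_le (A := A) (x := x) (y := y))).continuous₂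
  exact this

end CStarModuleRight

section Helpers
variable {A E : Type*} [CStarAlgebra A] [PartialOrder A] [StarOrderedRing A]
    [NormedAddCommGroup E] [NormedSpace ℂ E] [SMul Aᵐᵒᵖ E] [CStarModuleRight A E]

private lemma inner_lc_expand {I : Type*} (g : I → E) (f f' : I →₀ ℂ) :
    (inner _ (Finsupp.linearCombination ℂ g f) (Finsupp.linearCombination ℂ g f') : A)
      = ∑ i ∈ f.support, ∑ j ∈ f'.support,
          (star (f i) * f' j) • (inner _ (g i) (g j) : A) := by
  rw [Finsupp.linearCombination_apply, Finsupp.linearCombination_apply, Finsupp.sum, Finsupp.sum,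
    CStarModuleRight.inner_sum_left]
  refine Finset.sum_congr rfl fun i _ => ?_
  rw [CStarModuleRight.inner_sum_right]
  refine Finset.sum_congr rfl fun j _ => ?_
  rw [CStarModuleRight.inner_smul_left_complex, CStarModuleRight.inner_smul_right_complex, smul_smul]

omit [StarOrderedRing A] in
private lemma inner_op_smul_smul {a a' : A} {x y : E} :
    (inner _ (x <• a) (y <• a') : A) = star a * (inner _ x y : A) * a' := by
  rw [CStarModuleRight.inner_op_smul_left, CStarModuleRight.inner_op_smul_right, mul_assoc]

end Helpers

section Tmul
variable {A B C : Type*} [CStarAlgebra A] [CStarAlgebra B] [CStarAlgebra C]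
    [PartialOrder A] [StarOrderedRing A] [PartialOrder B] [StarOrderedRing B]
    [PartialOrder C] [StarOrderedRing C] (T : CStarTensor A B C)

private lemma tmul_nonneg {a : A} {b : B} (ha : 0 ≤ a) (hb : 0 ≤ b) : 0 ≤ T.tmul a b := by
  have hsa : IsSelfAdjoint (CFC.sqrt a) := IsSelfAdjoint.of_nonneg (CFC.sqrt_nonneg a)
  have hsb : IsSelfAdjoint (CFC.sqrt b) := IsSelfAdjoint.of_nonneg (CFC.sqrt_nonneg b)
  have : T.tmul a b
      = star (T.tmul (CFC.sqrt a) (CFC.sqrt b)) * T.tmul (CFC.sqrt a) (CFC.sqrt b) := by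
    rw [T.tmul_star, hsa.star_eq, hsb.star_eq, ← T.tmul_mul,
      CFC.sqrt_mul_sqrt_self a ha, CFC.sqrt_mul_sqrt_self b hb]
  rw [this]
  exact star_mul_self_nonneg _

private lemma real_smul_eq {A : Type*} [CStarAlgebra A] (r : ℝ) (x : A) :
    r • x = (r : ℂ) • x := by
  rw [← algebraMap_smul ℂ r x, Complex.coe_algebraMap]

private lemma tmul_norm_le {a : A} {b : B} (ha : 0 ≤ a) (hb : 0 ≤ b) :
    ‖T.tmul a b‖ ≤ ‖T.tmul 1 1‖ * (‖a‖ * ‖b‖) := by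
  have h1 : T.tmul a b ≤ T.tmul (‖a‖ • (1 : A)) b := by
    have := tmul_nonneg T (sub_nonneg.mpr (by
      simpa [Algebra.algebraMap_eq_smul_one] using
        IsSelfAdjoint.le_algebraMap_norm_self (IsSelfAdjoint.of_nonneg ha))) hb
    rw [map_sub, LinearMap.sub_apply, sub_nonneg] at this
    exact this
  have h2 : T.tmul (‖a‖ • (1 : A)) b ≤ T.tmul (‖a‖ • (1 : A)) (‖b‖ • (1 : B)) := by
    have hb1 : (0:B) ≤ ‖b‖ • (1 : B) - b := sub_nonneg.mpr (by
      simpa [Algebra.algebraMap_eq_smul_one] using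
        IsSelfAdjoint.le_algebraMap_norm_self (IsSelfAdjoint.of_nonneg hb))
    have := tmul_nonneg T
      (show (0:A) ≤ ‖a‖ • (1:A) from smul_nonneg (norm_nonneg a) zero_le_one) hb1
    rw [map_sub, sub_nonneg] at this
    exact this
  have h3 : T.tmul (‖a‖ • (1 : A)) (‖b‖ • (1 : B)) = (‖a‖ * ‖b‖) • T.tmul 1 1 := by
    rw [real_smul_eq ‖a‖, real_smul_eq ‖b‖, real_smul_eq (‖a‖ * ‖b‖)]
    simp [smul_smul, ← Complex.ofReal_mul, mul_comm]
  have h0 : (0:C) ≤ T.tmul a b := tmul_nonneg T ha hb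
  calc ‖T.tmul a b‖ ≤ ‖(‖a‖ * ‖b‖) • T.tmul 1 1‖ :=
        CStarAlgebra.norm_le_norm_of_nonneg_of_le h0 (h3 ▸ h1.trans h2)
    _ ≤ ‖T.tmul 1 1‖ * (‖a‖ * ‖b‖) := by
        rw [norm_smul, Real.norm_of_nonneg (by positivity)]; ring_nf; exact le_refl _

end Tmul
/-- the tensor product `K₁ ⊗ K₂` of the reproducing kernels of two
reproducing kernel Hilbert C*-modules `E₁` (over `A`, on `X`) and `E₂` (over `B`, on `S`)
is a positive definite kernel on `X × S` with values in `A ⊗ B`, and the reproducing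
kernel Hilbert C*-module `F'` associated with `K₁ ⊗ K₂` is unitarily equivalent to the
exterior tensor product `F = E₁ ⊗ E₂`, via the unitary determined by
`(k¹ x <• a) ⊗ (k² s <• b) ↦ k (x,s) <• (a ⊗ b)`. -/
theorem rkhcm_of_tensor_kernel_unitarily_equiv_extTensorProduct
    {A B C : Type*} [CStarAlgebra A] [PartialOrder A] [StarOrderedRing A]
    [CStarAlgebra B] [PartialOrder B] [StarOrderedRing B]
    [CStarAlgebra C] [PartialOrder C] [StarOrderedRing C]
    (T : CStarTensor A B C)
    {X S : Type*} [Nonempty X] [Nonempty S]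
    {E₁ E₂ F F' : Type*}
    [NormedAddCommGroup E₁] [NormedSpace ℂ E₁] [SMul Aᵐᵒᵖ E₁] [CStarModuleRight A E₁]
    [CompleteSpace E₁]
    [NormedAddCommGroup E₂] [NormedSpace ℂ E₂] [SMul Bᵐᵒᵖ E₂] [CStarModuleRight B E₂]
    [CompleteSpace E₂]
    [NormedAddCommGroup F] [NormedSpace ℂ F] [SMul Cᵐᵒᵖ F] [CStarModuleRight C F]
    [CompleteSpace F]
    [NormedAddCommGroup F'] [NormedSpace ℂ F'] [SMul Cᵐᵒᵖ F'] [CStarModuleRight C F']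
    [CompleteSpace F']
    (R₁ : RKHCM A X E₁) (R₂ : RKHCM B S E₂)
    (ET : ExtTensorProduct T E₁ E₂ F)
    (R : RKHCM C (X × S) F')
    (hR : ∀ p q : X × S, (inner C (R.k p) (R.k q) : C) =
      T.tmul (inner A (R₁.k p.1) (R₁.k q.1) : A) (inner B (R₂.k p.2) (R₂.k q.2) : B)) :
    IsPosDefKernel (fun p q : X × S =>
      T.tmul (inner A (R₁.k p.1) (R₁.k q.1) : A) (inner B (R₂.k p.2) (R₂.k q.2) : B)) ∧
    ∃ Φ : F ≃ₗ[ℂ] F',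
      (∀ u v : F, (inner C (Φ u) (Φ v) : C) = inner C u v) ∧
      (∀ (x : X) (s : S) (a : A) (b : B),
        Φ (ET.tmulE (R₁.k x <• a) (R₂.k s <• b)) = R.k (x, s) <• T.tmul a b) := by
  constructor
  · -- positive definiteness
    intro n s a
    dsimp only
    have key : ∑ i, ∑ j, star (a i) *
        T.tmul (inner _ (R₁.k (s i).1) (R₁.k (s j).1) : A) (inner _ (R₂.k (s i).2) (R₂.k (s j).2) : B)
          * a j
        = (inner _ (∑ i, R.k (s i) <• a i) (∑ j, R.k (s j) <• a j) : C) := by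
      rw [CStarModuleRight.inner_sum_left]
      refine Finset.sum_congr rfl fun i _ => ?_
      rw [CStarModuleRight.inner_sum_right]
      refine Finset.sum_congr rfl fun j _ => ?_
      rw [inner_op_smul_smul, hR]
    rw [key]
    exact CStarModuleRight.inner_self_nonneg
  · -- the unitary
    set g : ((X × S) × C) → F' := fun p => R.k p.1 <• p.2 with hg
    set h : ((X × S) × C) → F := fun p => ET.tmulE (R₁.k p.1.1) (R₂.k p.1.2) <• p.2 with hh
    set L : (((X × S) × C) →₀ ℂ) →ₗ[ℂ] F' := Finsupp.linearCombination ℂ g with hL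
    set M : (((X × S) × C) →₀ ℂ) →ₗ[ℂ] F := Finsupp.linearCombination ℂ h with hM
    have hgh : ∀ i j, (inner _ (g i) (g j) : C) = inner _ (h i) (h j) := by
      intro i j
      rw [hg, hh]
      dsimp only
      rw [inner_op_smul_smul, inner_op_smul_smul, hR, ET.inner_tmulE]
    have hLM : ∀ f f', (inner _ (L f) (L f') : C) = inner _ (M f) (M f') := by
      intro f f'
      rw [hL, hM, inner_lc_expand, inner_lc_expand]
      exact Finset.sum_congr rfl fun i _ => Finset.sum_congr rfl fun j _ => by rw [hgh]
    have hker : LinearMap.ker L ≤ LinearMap.ker M := by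
      intro f hf
      rw [LinearMap.mem_ker] at hf ⊢
      have h0 := hLM f f
      rw [hf] at h0
      simp only [CStarModuleRight.inner_zero_right] at h0
      exact CStarModuleRight.inner_self.mp h0.symm
    let Ψ₀ : (LinearMap.range L) →ₗ[ℂ] F :=
      (Submodule.liftQ (LinearMap.ker L) M hker).comp
        (LinearMap.quotKerEquivRange L).symm.toLinearMap
    have hΨ₀ : ∀ (f : ((X × S) × C) →₀ ℂ) (hm : L f ∈ LinearMap.range L),
        Ψ₀ ⟨L f, hm⟩ = M f := by
      intro f hm
      show Submodule.liftQ (LinearMap.ker L) M hker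
        ((LinearMap.quotKerEquivRange L).symm ⟨L f, hm⟩) = M f
      rw [LinearMap.quotKerEquivRange_symm_apply_image]
      rfl
    have hΨ₀inner : ∀ d d' : LinearMap.range L,
        (inner _ (Ψ₀ d) (Ψ₀ d') : C) = inner _ (d : F') (d' : F') := by
      rintro ⟨_, f, rfl⟩ ⟨_, f', rfl⟩
      change inner C (Ψ₀ ⟨L f, LinearMap.mem_range_self L f⟩)
        (Ψ₀ ⟨L f', LinearMap.mem_range_self L f'⟩) = inner C (L f) (L f')
      rw [hΨ₀, hΨ₀]
      exact (hLM f f').symm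
    have hΨ₀norm : ∀ d : LinearMap.range L, ‖Ψ₀ d‖ ≤ 1 * ‖d‖ := by
      intro d
      rw [one_mul]
      calc ‖Ψ₀ d‖ = Real.sqrt ‖(inner _ (Ψ₀ d) (Ψ₀ d) : C)‖ :=
            CStarModuleRight.norm_eq_sqrt_norm_inner_self _
        _ = Real.sqrt ‖(inner _ (d : F') (d : F') : C)‖ := by rw [hΨ₀inner]
        _ = ‖(d : F')‖ := (CStarModuleRight.norm_eq_sqrt_norm_inner_self _).symm
        _ = ‖d‖ := rfl
        _ ≤ ‖d‖ := le_rfl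
    let Ψc : (LinearMap.range L) →L[ℂ] F := Ψ₀.mkContinuous 1 hΨ₀norm
    let e : (LinearMap.range L) →L[ℂ] F' := (LinearMap.range L).subtypeL
    have hrangeL : ((LinearMap.range L : Submodule ℂ F') : Set F')
        = ((Submodule.span ℂ (Set.range g) : Submodule ℂ F') : Set F') := by
      rw [hL, Finsupp.range_linearCombination]
    have h_dense : DenseRange e := by
      have h1 : Set.range (e : (LinearMap.range L) → F')
          = ((LinearMap.range L : Submodule ℂ F') : Set F') := Subtype.range_coe
      rw [DenseRange, h1, hrangeL]
      exact R.dense_span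
    have h_e : IsUniformInducing (e : (LinearMap.range L) → F') :=
      isUniformEmbedding_subtype_val.isUniformInducing
    let Ψ : F' →L[ℂ] F := Ψc.extend e
    have hΨd : ∀ d : LinearMap.range L, Ψ (d : F') = Ψ₀ d := fun d =>
      ContinuousLinearMap.extend_eq Ψc h_dense h_e d
    have hmemg : ∀ i, g i ∈ LinearMap.range L := fun i =>
      ⟨Finsupp.single i 1, by rw [hL, Finsupp.linearCombination_single, one_smul]⟩
    have hΨg : ∀ i, Ψ (g i) = h i := by
      intro i
      have hgi : g i = L (Finsupp.single i 1) := by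
        rw [hL, Finsupp.linearCombination_single, one_smul]
      have hhi : h i = M (Finsupp.single i 1) := by
        rw [hM, Finsupp.linearCombination_single, one_smul]
      have h1 := hΨd ⟨g i, hmemg i⟩
      rw [show ((⟨g i, hmemg i⟩ : LinearMap.range L) : F') = g i from rfl] at h1
      rw [h1, hhi,
        show (⟨g i, hmemg i⟩ : LinearMap.range L)
          = ⟨L (Finsupp.single i 1), LinearMap.mem_range_self L _⟩ from Subtype.ext hgi,
        hΨ₀]
    have hΨinner : ∀ u v : F', (inner _ (Ψ u) (Ψ v) : C) = inner _ u v := by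
      have hD : Dense (((LinearMap.range L : Submodule ℂ F') : Set F') ×ˢ
          ((LinearMap.range L : Submodule ℂ F') : Set F')) := by
        rw [hrangeL]; exact R.dense_span.prod R.dense_span
      have hc1 : Continuous fun p : F' × F' => (inner _ (Ψ p.1) (Ψ p.2) : C) :=
        CStarModuleRight.continuous_inner.comp (Ψ.continuous.prodMap Ψ.continuous)
      have hc2 : Continuous fun p : F' × F' => (inner _ p.1 p.2 : C) :=
        CStarModuleRight.continuous_inner
      have heq := Continuous.ext_on hD hc1 hc2 ?_
      · intro u v
        exact congrFun heq (u, v)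
      · rintro ⟨u, v⟩ ⟨hu, hv⟩
        show (inner _ (Ψ u) (Ψ v) : C) = inner _ u v
        rw [show u = ((⟨u, hu⟩ : LinearMap.range L) : F') from rfl,
          show v = ((⟨v, hv⟩ : LinearMap.range L) : F') from rfl, hΨd, hΨd, hΨ₀inner]
    have hΨnorm : ∀ u : F', ‖Ψ u‖ = ‖u‖ := by
      intro u
      rw [CStarModuleRight.norm_eq_sqrt_norm_inner_self (A := C) (Ψ u), hΨinner,
        ← CStarModuleRight.norm_eq_sqrt_norm_inner_self (A := C) u]
    have hinj : Function.Injective Ψ := by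
      intro u v huv
      have h0 : ‖u - v‖ = 0 := by rw [← hΨnorm, map_sub, huv, sub_self, norm_zero]
      rw [norm_eq_zero, sub_eq_zero] at h0
      exact h0
    have hiso : Isometry (Ψ : F' → F) := AddMonoidHomClass.isometry_of_norm Ψ hΨnorm
    have hMrclosed : IsClosed ((LinearMap.range Ψ.toLinearMap : Submodule ℂ F) : Set F) := by
      have : ((LinearMap.range Ψ.toLinearMap : Submodule ℂ F) : Set F) = Set.range Ψ := by
        rw [LinearMap.coe_range]; rfl
      rw [this]
      exact hiso.isClosedEmbedding.isClosed_range
    -- continuity of tmulE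
    have hbE : ∀ (x : E₁) (y : E₂),
        ‖ET.tmulE x y‖ ≤ Real.sqrt ‖T.tmul 1 1‖ * (‖x‖ * ‖y‖) := by
      intro x y
      have h1 : ‖ET.tmulE x y‖ ^ 2 ≤ ‖T.tmul 1 1‖ * (‖x‖ * ‖y‖) ^ 2 := by
        rw [CStarModuleRight.norm_sq_eq (A := C), ET.inner_tmulE]
        calc ‖T.tmul (inner _ x x : A) (inner _ y y : B)‖
            ≤ ‖T.tmul 1 1‖ * (‖(inner _ x x : A)‖ * ‖(inner _ y y : B)‖) :=
              tmul_norm_le T CStarModuleRight.inner_self_nonneg CStarModuleRight.inner_self_nonneg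
          _ = ‖T.tmul 1 1‖ * (‖x‖ * ‖y‖) ^ 2 := by
              rw [← CStarModuleRight.norm_sq_eq (A := A), ← CStarModuleRight.norm_sq_eq (A := B)]; ring
      calc ‖ET.tmulE x y‖ = Real.sqrt (‖ET.tmulE x y‖ ^ 2) :=
            (Real.sqrt_sq (norm_nonneg _)).symm
        _ ≤ Real.sqrt (‖T.tmul 1 1‖ * (‖x‖ * ‖y‖) ^ 2) := Real.sqrt_le_sqrt h1
        _ = Real.sqrt ‖T.tmul 1 1‖ * (‖x‖ * ‖y‖) := by
            rw [Real.sqrt_mul (norm_nonneg _), Real.sqrt_sq (by positivity)]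
    have hcontR : ∀ x : E₁, Continuous fun y : E₂ => ET.tmulE x y := fun x =>
      (LinearMap.mkContinuous (ET.tmulE x) (Real.sqrt ‖T.tmul 1 1‖ * ‖x‖) (fun y => by
        calc ‖ET.tmulE x y‖ ≤ Real.sqrt ‖T.tmul 1 1‖ * (‖x‖ * ‖y‖) := hbE x y
          _ = Real.sqrt ‖T.tmul 1 1‖ * ‖x‖ * ‖y‖ := by ring)).continuous
    have hcontL : ∀ y : E₂, Continuous fun x : E₁ => ET.tmulE x y := fun y =>
      (LinearMap.mkContinuous (ET.tmulE.flip y) (Real.sqrt ‖T.tmul 1 1‖ * ‖y‖) (fun x => by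
        calc ‖ET.tmulE x y‖ ≤ Real.sqrt ‖T.tmul 1 1‖ * (‖x‖ * ‖y‖) := hbE x y
          _ = Real.sqrt ‖T.tmul 1 1‖ * ‖y‖ * ‖x‖ := by ring)).continuous
    have hstep1 : ∀ (x : E₁) (t : S) (b : B),
        ET.tmulE x (R₂.k t <• b) ∈ LinearMap.range Ψ.toLinearMap := by
      intro x t b
      let Q : Submodule ℂ E₁ :=
        Submodule.comap (ET.tmulE.flip (R₂.k t <• b)) (LinearMap.range Ψ.toLinearMap)
      have hQc : IsClosed (Q : Set E₁) := hMrclosed.preimage (hcontL (R₂.k t <• b))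
      have hspan : (Submodule.span ℂ (Set.range fun p : X × A => R₁.k p.1 <• p.2)) ≤ Q := by
        rw [Submodule.span_le]
        rintro _ ⟨p, rfl⟩
        show ET.tmulE (R₁.k p.1 <• p.2) (R₂.k t <• b) ∈ LinearMap.range Ψ.toLinearMap
        rw [ET.tmulE_smul]
        exact ⟨g ((p.1, t), T.tmul p.2 b), hΨg ((p.1, t), T.tmul p.2 b)⟩
      have hx : x ∈ closure
          ((Submodule.span ℂ (Set.range fun p : X × A => R₁.k p.1 <• p.2) : Submodule ℂ E₁)
            : Set E₁) := by
        rw [R₁.dense_span.closure_eq]; trivial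
      exact closure_minimal hspan hQc hx
    have hstep2 : ∀ (x : E₁) (y : E₂), ET.tmulE x y ∈ LinearMap.range Ψ.toLinearMap := by
      intro x y
      let Q : Submodule ℂ E₂ :=
        Submodule.comap (ET.tmulE x) (LinearMap.range Ψ.toLinearMap)
      have hQc : IsClosed (Q : Set E₂) := hMrclosed.preimage (hcontR x)
      have hspan : (Submodule.span ℂ (Set.range fun p : S × B => R₂.k p.1 <• p.2)) ≤ Q := by
        rw [Submodule.span_le]
        rintro _ ⟨p, rfl⟩
        exact hstep1 x p.1 p.2
      have hy : y ∈ closure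
          ((Submodule.span ℂ (Set.range fun p : S × B => R₂.k p.1 <• p.2) : Submodule ℂ E₂)
            : Set E₂) := by
        rw [R₂.dense_span.closure_eq]; trivial
      exact closure_minimal hspan hQc hy
    have hsurj : Function.Surjective Ψ := by
      intro w
      have hspan : (Submodule.span ℂ (Set.range fun p : E₁ × E₂ => ET.tmulE p.1 p.2))
          ≤ LinearMap.range Ψ.toLinearMap := by
        rw [Submodule.span_le]
        rintro _ ⟨p, rfl⟩
        exact hstep2 p.1 p.2
      have hw : w ∈ closure
          ((Submodule.span ℂ (Set.range fun p : E₁ × E₂ => ET.tmulE p.1 p.2) : Submodule ℂ F)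
            : Set F) := by
        rw [ET.dense_span.closure_eq]; trivial
      exact closure_minimal hspan hMrclosed hw
    let eqv : F' ≃ₗ[ℂ] F := LinearEquiv.ofBijective Ψ.toLinearMap ⟨hinj, hsurj⟩
    refine ⟨eqv.symm, ?_, ?_⟩
    · intro u v
      have h1 : Ψ (eqv.symm u) = u := eqv.apply_symm_apply u
      have h2 : Ψ (eqv.symm v) = v := eqv.apply_symm_apply v
      rw [← hΨinner (eqv.symm u) (eqv.symm v), h1, h2]
    · intro x t a b
      rw [LinearEquiv.symm_apply_eq, ET.tmulE_smul]
      exact (hΨg ((x, t), T.tmul a b)).symm
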